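/- Let n ≥ 1 and let Ω ⊆ ℝⁿ be a nonempty bounded open set which has the ε-cone property for some ε ∈ (0, π/2]. Then Ω satisfies the volume doubling property with exponent δ = n; that is, there exists a constant K > 0 such that for every x ∈ Ω and all radii 0 < r ≤ s one has V_Ω(x,s) ≤ K (s/r)ⁿ V_Ω(x,r). -/

import Mathlib

open MeasureTheory Metric Set

noncomputable section

/-- The open truncated cone with vertex `y`, direction `ξ`, aperture `ε` and length `r`:
`{z : (z−y)·ξ ≥ cos(ε)|z−y| and 0 < |z−y| < r}`. -/
def coneSet (n : ℕ) (y ξ : EuclideanSpace ℝ (Fin n)) (ε r : ℝ) :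
    Set (EuclideanSpace ℝ (Fin n)) :=
  {z | Real.cos ε * ‖z - y‖ ≤ (inner ℝ (z - y) ξ : ℝ) ∧ 0 < ‖z - y‖ ∧ ‖z - y‖ < r}

/-- `Ω` has the `ε`-cone property: for every boundary point `x` there is a unit direction
`ξ` such that for every `y ∈ closure Ω ∩ B(x,ε)` the cone `𝒞(y,ξ,ε)` is contained in `Ω`. -/
def HasConeProperty (n : ℕ) (Ω : Set (EuclideanSpace ℝ (Fin n))) (ε : ℝ) : Prop :=
  ∀ x ∈ frontier Ω, ∃ ξ : EuclideanSpace ℝ (Fin n), ‖ξ‖ = 1 ∧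
    ∀ y ∈ closure Ω ∩ ball x ε, coneSet n y ξ ε ε ⊆ Ω

lemma ball_subset_coneSet (n : ℕ) (x ξ : EuclideanSpace ℝ (Fin n)) (hξ : ‖ξ‖ = 1)
    {ε r : ℝ} (hε : 0 < ε) (hε2 : ε ≤ Real.pi / 2) (hr : 0 < r) :
    ball (x + (r / 2) • ξ) (r * (1 - Real.cos ε) / 4) ⊆ coneSet n x ξ ε r := by
  intro z hz
  have hcos1 : Real.cos ε ≤ 1 := Real.cos_le_one ε
  have hcos0 : 0 ≤ Real.cos ε := Real.cos_nonneg_of_mem_Icc ⟨by linarith [Real.pi_pos], hε2⟩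
  set t : ℝ := r / 2 with ht
  set c : EuclideanSpace ℝ (Fin n) := x + t • ξ with hc
  set ρ : ℝ := r * (1 - Real.cos ε) / 4 with hρ
  have hρt : ρ ≤ t / 2 := by
    rw [hρ, ht]; nlinarith [Real.neg_one_le_cos ε]
  have hzc : ‖z - c‖ < ρ := by
    rw [mem_ball, dist_eq_norm] at hz; exact hz
  have hdecomp : z - x = (z - c) + t • ξ := by rw [hc]; abel
  have hnt : ‖t • ξ‖ = t := by
    rw [norm_smul, hξ, mul_one, Real.norm_eq_abs, abs_of_pos (by positivity)]
  have hub : ‖z - x‖ ≤ ‖z - c‖ + t := by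
    rw [hdecomp]
    calc ‖(z - c) + t • ξ‖ ≤ ‖z - c‖ + ‖t • ξ‖ := norm_add_le _ _
    _ = ‖z - c‖ + t := by rw [hnt]
  have hlb : t - ‖z - c‖ ≤ ‖z - x‖ := by
    have := norm_sub_norm_le (t • ξ) (c - z)
    have h1 : t • ξ - (c - z) = z - x := by rw [hc]; abel
    rw [h1, hnt] at this
    have h2 : ‖c - z‖ = ‖z - c‖ := norm_sub_rev _ _
    linarith [this, h2.le, h2.ge]
  have hinner : t - ‖z - c‖ ≤ (inner ℝ (z - x) ξ : ℝ) := by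
    rw [hdecomp, inner_add_left, real_inner_smul_left]
    have : ((inner ℝ ξ ξ : ℝ)) = 1 := by
      rw [real_inner_self_eq_norm_sq, hξ]; norm_num
    rw [this, mul_one]
    have := abs_real_inner_le_norm (z - c) ξ
    rw [hξ, mul_one] at this
    have := abs_le.mp this
    linarith [this.1]
  refine ⟨?_, ?_, ?_⟩
  · -- cos ε * ‖z - x‖ ≤ inner (z - x) ξ
    have h1 : Real.cos ε * ‖z - x‖ ≤ Real.cos ε * (t + ρ) := by
      apply mul_le_mul_of_nonneg_left _ hcos0
      linarith
    have h2 : Real.cos ε * (t + ρ) ≤ t - ρ := by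
      rw [hρ, ht]; nlinarith [Real.neg_one_le_cos ε]
    have h3 : t - ρ ≤ t - ‖z - c‖ := by linarith
    linarith
  · have : 0 < t - ρ := by linarith [hρt, show 0 < t by rw [ht]; positivity]
    linarith
  · have : t + ρ < r := by
      have : 0 < t := by rw [ht]; positivity
      rw [ht] at *; linarith [hρt]
    linarith

lemma cone_lower_bound (n : ℕ) (hn : 1 ≤ n)
    (Ω : Set (EuclideanSpace ℝ (Fin n)))
    (hbd : Bornology.IsBounded Ω) (hop : IsOpen Ω)
    {ε : ℝ} (hε : 0 < ε) (hε2 : ε ≤ Real.pi / 2)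
    (hcone : HasConeProperty n Ω ε)
    {x : EuclideanSpace ℝ (Fin n)} (hx : x ∈ Ω) {r : ℝ} (hr : 0 < r) (hrε : r ≤ ε) :
    ENNReal.ofReal ((r * (1 - Real.cos ε) / 4) ^ n) *
      volume (ball (0 : EuclideanSpace ℝ (Fin n)) 1) ≤ volume (Ω ∩ ball x r) := by
  haveI : Nontrivial (EuclideanSpace ℝ (Fin n)) :=
    Module.nontrivial_of_finrank_pos (R := ℝ) (by rw [finrank_euclideanSpace_fin]; omega)
  have hcos1 : Real.cos ε < 1 := by
    rcases lt_or_eq_of_le (Real.cos_le_one ε) with h | h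
    · exact h
    · exfalso
      have := (Real.cos_eq_one_iff_of_lt_of_lt (x := ε)
        (by linarith [Real.pi_pos]) (by linarith [Real.pi_pos])).mp h
      linarith
  have hcos1' : 0 < 1 - Real.cos ε := by linarith
  have hρpos : 0 < r * (1 - Real.cos ε) / 4 := by positivity
  have hfr : Module.finrank ℝ (EuclideanSpace ℝ (Fin n)) = n := finrank_euclideanSpace_fin
  by_cases hball : ball x (r / 2) ⊆ Ω
  · -- ball x (r/2) ⊆ Ω ∩ ball x r
    have hsub : ball x (r / 2) ⊆ Ω ∩ ball x r :=
      fun z hz => ⟨hball hz, ball_subset_ball (by linarith) hz⟩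
    calc ENNReal.ofReal ((r * (1 - Real.cos ε) / 4) ^ n) *
          volume (ball (0 : EuclideanSpace ℝ (Fin n)) 1)
        ≤ ENNReal.ofReal ((r / 2) ^ n) * volume (ball (0 : EuclideanSpace ℝ (Fin n)) 1) := by
          apply mul_le_mul_left
          apply ENNReal.ofReal_le_ofReal
          apply pow_le_pow_left₀ hρpos.le
          nlinarith [Real.neg_one_le_cos ε]
      _ = volume (ball x (r / 2)) := by
          rw [Measure.addHaar_ball_of_pos volume x (by positivity : (0:ℝ) < r / 2), hfr]
      _ ≤ volume (Ω ∩ ball x r) := measure_mono hsub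
  · -- there is a frontier point within r/2
    obtain ⟨z, hzball, hzΩ⟩ := not_subset.mp hball
    have hΩuniv : Ω ≠ univ := by
      intro h; exact NormedSpace.unbounded_univ ℝ (EuclideanSpace ℝ (Fin n)) (h ▸ hbd)
    obtain ⟨y, hyfr, hyd⟩ := exists_mem_frontier_infDist_compl_eq_dist hx hΩuniv
    have hdxy : dist x y < r / 2 := by
      rw [← hyd]
      exact lt_of_le_of_lt (infDist_le_dist_of_mem hzΩ) (mem_ball'.mp hzball)
    obtain ⟨ξ, hξ, hconeξ⟩ := hcone y hyfr
    have hxmem : x ∈ closure Ω ∩ ball y ε :=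
      ⟨subset_closure hx, mem_ball.mpr (by rw [dist_comm] at hdxy ⊢; linarith)⟩
    have hconesub : coneSet n x ξ ε r ⊆ Ω ∩ ball x r := by
      intro w hw
      obtain ⟨h1, h2, h3⟩ := hw
      refine ⟨hconeξ x hxmem ⟨h1, h2, by linarith⟩, ?_⟩
      rw [mem_ball, dist_eq_norm]; exact h3
    have hbsub := (ball_subset_coneSet n x ξ hξ hε hε2 hr).trans hconesub
    calc ENNReal.ofReal ((r * (1 - Real.cos ε) / 4) ^ n) *
          volume (ball (0 : EuclideanSpace ℝ (Fin n)) 1)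
        = volume (ball (x + (r / 2) • ξ) (r * (1 - Real.cos ε) / 4)) := by
          rw [Measure.addHaar_ball_of_pos volume _ hρpos, hfr]
      _ ≤ volume (Ω ∩ ball x r) := measure_mono hbsub

/-- A nonempty bounded open set of `ℝⁿ` with the `ε`-cone property satisfies the volume
doubling property with exponent `n`. -/
theorem volume_doubling_of_coneProperty (n : ℕ) (hn : 1 ≤ n)
    (Ω : Set (EuclideanSpace ℝ (Fin n))) (hne : Ω.Nonempty)
    (hbd : Bornology.IsBounded Ω) (hop : IsOpen Ω)
    (ε : ℝ) (hε : ε ∈ Set.Ioc 0 (Real.pi / 2))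
    (hcone : HasConeProperty n Ω ε) :
    ∃ K : ℝ, 0 < K ∧ ∀ x ∈ Ω, ∀ r s : ℝ, 0 < r → r ≤ s →
      volume (Ω ∩ ball x s) ≤
        ENNReal.ofReal (K * (s / r) ^ n) * volume (Ω ∩ ball x r) := by
  obtain ⟨hε0, hε2⟩ := hε
  haveI : Nontrivial (EuclideanSpace ℝ (Fin n)) :=
    Module.nontrivial_of_finrank_pos (R := ℝ) (by rw [finrank_euclideanSpace_fin]; omega)
  have hcos1 : Real.cos ε < 1 := by
    rcases lt_or_eq_of_le (Real.cos_le_one ε) with h | h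
    · exact h
    · exfalso
      have := (Real.cos_eq_one_iff_of_lt_of_lt (x := ε)
        (by linarith [Real.pi_pos]) (by linarith [Real.pi_pos])).mp h
      linarith
  have hc2 : 0 < (1 - Real.cos ε) / 4 := by linarith
  set ω : ENNReal := volume (ball (0 : EuclideanSpace ℝ (Fin n)) 1) with hω
  have hωpos : 0 < ω := measure_ball_pos volume 0 one_pos
  have hωfin : ω < ⊤ := measure_ball_lt_top
  have hωt : 0 < ω.toReal := ENNReal.toReal_pos hωpos.ne' hωfin.ne
  set M : ENNReal := volume Ω with hM
  have hMfin : M < ⊤ := by rw [hM]; exact hbd.measure_lt_top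
  set c : ℝ := (1 - Real.cos ε) / 4 with hc
  set K : ℝ := 1 / c ^ n + M.toReal / ((ε * c) ^ n * ω.toReal) + 1 with hK
  have hKpos : 0 < K := by positivity
  refine ⟨K, hKpos, fun x hx r s hr hrs => ?_⟩
  have hs : 0 < s := lt_of_lt_of_le hr hrs
  have hsr1 : 1 ≤ (s / r) ^ n := one_le_pow₀ ((le_div_iff₀ hr).mpr (by linarith))
  have hKsr : 0 ≤ K * (s / r) ^ n := by positivity
  have hfr : Module.finrank ℝ (EuclideanSpace ℝ (Fin n)) = n := finrank_euclideanSpace_fin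
  by_cases hcase : r ≤ ε
  · -- small radius case
    have hlow := cone_lower_bound n hn Ω hbd hop hε0 hε2 hcone hx hr hcase
    calc volume (Ω ∩ ball x s) ≤ volume (ball x s) := measure_mono inter_subset_right
      _ = ENNReal.ofReal (s ^ n) * ω := by
          rw [Measure.addHaar_ball_of_pos volume x hs, hfr]
      _ ≤ ENNReal.ofReal (K * (s / r) ^ n) *
            (ENNReal.ofReal ((r * (1 - Real.cos ε) / 4) ^ n) * ω) := by
          rw [← mul_assoc, ← ENNReal.ofReal_mul hKsr]
          apply mul_le_mul_left
          apply ENNReal.ofReal_le_ofReal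
          have hid : (s / r) ^ n * (r * (1 - Real.cos ε) / 4) ^ n = c ^ n * s ^ n := by
            rw [← mul_pow, ← mul_pow]
            congr 1
            field_simp [hc]
            ring
          have hKc : 1 ≤ K * c ^ n := by
            have h1 : 1 / c ^ n * c ^ n = 1 := by
              field_simp
            have hKge : 1 / c ^ n ≤ K := by
              have : 0 ≤ M.toReal / ((ε * c) ^ n * ω.toReal) := by positivity
              rw [hK]; linarith
            calc (1:ℝ) = 1 / c ^ n * c ^ n := h1.symm
              _ ≤ K * c ^ n := by
                  apply mul_le_mul_of_nonneg_right hKge (by positivity)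
          calc s ^ n = 1 * s ^ n := (one_mul _).symm
            _ ≤ (K * c ^ n) * s ^ n := by
                apply mul_le_mul_of_nonneg_right hKc (by positivity)
            _ = K * (c ^ n * s ^ n) := by ring
            _ ≤ K * ((s / r) ^ n * (r * (1 - Real.cos ε) / 4) ^ n) := by rw [hid]
            _ = K * (s / r) ^ n * (r * (1 - Real.cos ε) / 4) ^ n := by ring
      _ ≤ ENNReal.ofReal (K * (s / r) ^ n) * volume (Ω ∩ ball x r) :=
          mul_le_mul_right hlow _
  · -- large radius case: r > ε
    push_neg at hcase
    have hlow' := cone_lower_bound n hn Ω hbd hop hε0 hε2 hcone hx hε0 le_rfl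
    have hlow : ENNReal.ofReal ((ε * (1 - Real.cos ε) / 4) ^ n) * ω ≤ volume (Ω ∩ ball x r) :=
      hlow'.trans (measure_mono (inter_subset_inter_right _ (ball_subset_ball hcase.le)))
    have hεc : ε * (1 - Real.cos ε) / 4 = ε * c := by rw [hc]; ring
    calc volume (Ω ∩ ball x s) ≤ M := measure_mono inter_subset_left
      _ = ENNReal.ofReal M.toReal := (ENNReal.ofReal_toReal hMfin.ne).symm
      _ ≤ ENNReal.ofReal (K * (s / r) ^ n) *
            (ENNReal.ofReal ((ε * (1 - Real.cos ε) / 4) ^ n) * ω) := by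
          rw [hεc, show ω = ENNReal.ofReal ω.toReal from (ENNReal.ofReal_toReal hωfin.ne).symm,
            ← ENNReal.ofReal_mul (by positivity : (0:ℝ) ≤ (ε * c) ^ n),
            ← ENNReal.ofReal_mul hKsr]
          apply ENNReal.ofReal_le_ofReal
          have h1 : M.toReal / ((ε * c) ^ n * ω.toReal) * ((ε * c) ^ n * ω.toReal) = M.toReal := by
            field_simp
          have hKge : M.toReal / ((ε * c) ^ n * ω.toReal) ≤ K * (s / r) ^ n := by
            have hB : 0 ≤ M.toReal / ((ε * c) ^ n * ω.toReal) := by positivity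
            have : M.toReal / ((ε * c) ^ n * ω.toReal) ≤ K := by
              rw [hK]
              have : 0 ≤ 1 / c ^ n := by positivity
              linarith
            calc M.toReal / ((ε * c) ^ n * ω.toReal) ≤ K := this
              _ = K * 1 := (mul_one K).symm
              _ ≤ K * (s / r) ^ n := by
                  apply mul_le_mul_of_nonneg_left hsr1 hKpos.le
          calc M.toReal = M.toReal / ((ε * c) ^ n * ω.toReal) * ((ε * c) ^ n * ω.toReal) :=
                h1.symm
            _ ≤ K * (s / r) ^ n * ((ε * c) ^ n * ω.toReal) := by
                apply mul_le_mul_of_nonneg_right hKge (by positivity)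
      _ ≤ ENNReal.ofReal (K * (s / r) ^ n) * volume (Ω ∩ ball x r) := by
          rw [hεc]
          rw [hεc] at hlow
          exact mul_le_mul_right hlow _
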